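/- arXiv:1110.6710 — 5 statements merged into one kernel-verified Lean document; each statement's English description precedes it below -/
import Mathlib

section
/- Let A, B be integers, f(t) = t^3 + At + B, and F(t) = t^4 + 2At^2 + 4Bt. If α₁, α₂, α₃ are the roots of f, then F(α₁)F(α₂)F(α₃) = -B²(2A³ + 27B²). -/
theorem prod_F_roots (K : Type*) [CommRing K] (A B : ℤ) (α₁ α₂ α₃ : K)
    (h1 : α₁ + α₂ + α₃ = 0)
    (h2 : α₁ * α₂ + α₂ * α₃ + α₃ * α₁ = (A : K))
    (h3 : α₁ * α₂ * α₃ = -(B : K)) :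
    (α₁ ^ 4 + 2 * (A : K) * α₁ ^ 2 + 4 * (B : K) * α₁) *
    (α₂ ^ 4 + 2 * (A : K) * α₂ ^ 2 + 4 * (B : K) * α₂) *
    (α₃ ^ 4 + 2 * (A : K) * α₃ ^ 2 + 4 * (B : K) * α₃) =
    -(B : K) ^ 2 * (2 * (A : K) ^ 3 + 27 * (B : K) ^ 2) := by
  have hb : (B : K) = -(α₁ * α₂ * α₃) := by linear_combination h3
  have ha : α₃ = -(α₁ + α₂) := by linear_combination h1
  rw [← h2, hb]
  subst ha
  ring
end

section
/- Let A, B be integers, f(t) = t³ + At + B, F(t) = t⁴ + 2At² + 4Bt, f₁(t) = t³ + 2A²t² + A(A³ + 18B²)t + B²(2A³ + 27B²), and D(t) = t⁶ + 4At⁴ + 10Bt³ + 5A²t² + 18ABt + 2A³ + 27B². Then as polynomials, f₁(F(t)) = D(t)·f(t)². -/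
open Polynomial

theorem f1_comp_F_eq (A B : ℤ) :
    (X ^ 3 + C (2 * A ^ 2) * X ^ 2 + C (A * (A ^ 3 + 18 * B ^ 2)) * X
        + C (B ^ 2 * (2 * A ^ 3 + 27 * B ^ 2))).comp
      (X ^ 4 + C (2 * A) * X ^ 2 + C (4 * B) * X) =
    (X ^ 6 + C (4 * A) * X ^ 4 + C (10 * B) * X ^ 3 + C (5 * A ^ 2) * X ^ 2
        + C (18 * A * B) * X + C (2 * A ^ 3 + 27 * B ^ 2)) *
      (X ^ 3 + C A * X + C B) ^ 2 := by
  simp only [add_comp, mul_comp, pow_comp, X_comp, C_comp, map_mul, map_add, map_pow,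
    map_ofNat, Polynomial.ofNat_comp]
  ring
end

section
/- Let A, B be integers and f₁(t) = t³ + 2A²t² + A(A³ + 18B²)t + B²(2A³ + 27B²). Then the discriminant of f₁ equals B² · (disc(f))³, where f(t) = t³ + At + B has discriminant disc(f) = -4A³ - 27B². Equivalently, disc(f₁) = B²·(-4A³ - 27B²)³. -/
theorem disc_f1 (A B : ℤ) :
    let p := 2 * A ^ 2
    let q := A * (A ^ 3 + 18 * B ^ 2)
    let r := B ^ 2 * (2 * A ^ 3 + 27 * B ^ 2)
    p ^ 2 * q ^ 2 - 4 * q ^ 3 - 4 * p ^ 3 * r + 18 * p * q * r - 27 * r ^ 2 =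
      B ^ 2 * (-4 * A ^ 3 - 27 * B ^ 2) ^ 3 := by
  intro p q r
  simp only [p, q, r]
  ring
end

section
/- For every real number t, (t⁴ + 2t² + 12t + 30)³ < 3.37933³ · (t⁶ + 4t⁴ + 30t³ + 5t² + 54t + 245)². -/
theorem quartic_cubed_bound (t : ℝ) :
    (t ^ 4 + 2 * t ^ 2 + 12 * t + 30) ^ 3 <
      (3.37933 : ℝ) ^ 3 *
        (t ^ 6 + 4 * t ^ 4 + 30 * t ^ 3 + 5 * t ^ 2 + 54 * t + 245) ^ 2 := by
  nlinarith [sq_nonneg ((-681097844002325/1099511627776 : ℝ) + (520609994295703/274877906944 : ℝ) * t + (1482322611494913/1099511627776 : ℝ) * t ^ 2 + (-27448332538361/68719476736 : ℝ) * t ^ 3 + (-155736925607979/549755813888 : ℝ) * t ^ 4 + (6741316432857/1099511627776 : ℝ) * t ^ 6),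
    sq_nonneg ((-758928134292631/549755813888 : ℝ) + (-664093467928197/549755813888 : ℝ) * t + (79332123792827/68719476736 : ℝ) * t ^ 2 + (222061839537731/274877906944 : ℝ) * t ^ 3 + (-64208767554385/1099511627776 : ℝ) * t ^ 4 + (-67568248644809/1099511627776 : ℝ) * t ^ 5),
    sq_nonneg t,
    sq_nonneg (t ^ 2),
    sq_nonneg (t ^ 3),
    sq_nonneg (t ^ 4),
    sq_nonneg (t ^ 5),
    sq_nonneg (t ^ 6),
    sq_nonneg (1 + t),
    sq_nonneg (t + t ^ 2),
    sq_nonneg (t ^ 2 - t ^ 3),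
    sq_nonneg (t ^ 3 + t ^ 4),
    sq_nonneg (t ^ 4 - t ^ 5)]
end

section
/- For the polynomials f(t) = t³ + t + 3, F(t) = t⁴ + 2t² + 12t, f₁(x) = x³ + 2x² + 163x + 2205, and D(t) = t⁶ + 4t⁴ + 30t³ + 5t² + 54t + 245, the identity f₁(F(t)) = D(t)·f(t)² holds in ℤ[t]. Consequently, for every integer t, the point (F(t), f(t)) lies on the curve D(t)·y² = f₁(x), equivalently (D(t)·F(t), D(t)²·f(t)) lies on y² = x³ + 2D(t)x² + 163D(t)²x + 2205D(t)³. -/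
open Polynomial

theorem twist_family_example :
    ((X ^ 3 + C 2 * X ^ 2 + C 163 * X + C 2205 : ℤ[X]).comp
        (X ^ 4 + C 2 * X ^ 2 + C 12 * X) =
      (X ^ 6 + C 4 * X ^ 4 + C 30 * X ^ 3 + C 5 * X ^ 2 + C 54 * X + C 245) *
        (X ^ 3 + X + C 3) ^ 2)
    ∧ (∀ t : ℤ,
        let D := t ^ 6 + 4 * t ^ 4 + 30 * t ^ 3 + 5 * t ^ 2 + 54 * t + 245
        let F := t ^ 4 + 2 * t ^ 2 + 12 * t
        let f := t ^ 3 + t + 3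
        D * f ^ 2 = F ^ 3 + 2 * F ^ 2 + 163 * F + 2205 ∧
        (D ^ 2 * f) ^ 2 = (D * F) ^ 3 + 2 * D * (D * F) ^ 2
          + 163 * D ^ 2 * (D * F) + 2205 * D ^ 3) := by
  constructor
  · simp only [add_comp, mul_comp, pow_comp, X_comp, C_comp, map_ofNat, Polynomial.ofNat_comp]
    ring
  · intro t D F f
    constructor <;> ring
end
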